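/- Let A ∈ ℝ^{m×n} have columns of unit ℓ2-norm and mutual coherence μ, let k ≥ 2 be an integer with μ < 1/(2k−1), let b = Ax + z with ‖z‖₂ ≤ ε, let λ > 0, and let x^♯ be a minimizer of u ↦ ‖u‖₁ + (1/(2λ))‖b − Au‖₂². Then ‖A(x^♯ − x)‖₂ ≤ (2λ/(√k·α₁·λ + ε))·‖x − x_[k]‖₁ + 2(√k·α₁·λ + ε), where α₁ = √(1+(k−1)μ)/(1−(k−1)μ). -/
import Mathlib


noncomputable def l2norm {ι : Type*} [Fintype ι] (v : ι → ℝ) : ℝ :=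
  Real.sqrt (∑ i, (v i) ^ 2)

noncomputable def l1norm {ι : Type*} [Fintype ι] (v : ι → ℝ) : ℝ :=
  ∑ i, |v i|

noncomputable def linfnorm {ι : Type*} [Fintype ι] (v : ι → ℝ) : ℝ :=
  ⨆ i, |v i|

/-- The mutual coherence of a matrix: the largest absolute inner product
between two distinct columns. -/
noncomputable def mutualCoherence {m n : ℕ} (A : Matrix (Fin m) (Fin n) ℝ) : ℝ :=
  ⨆ p : {p : Fin n × Fin n // p.1 ≠ p.2}, |∑ r, A r p.1.1 * A r p.1.2|

/-- `restrict v E` agrees with `v` on `E` and vanishes outside of `E`. -/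
def restrict {n : ℕ} (v : Fin n → ℝ) (E : Finset (Fin n)) : Fin n → ℝ :=
  fun i => if i ∈ E then v i else 0

/-- A vector is `k`-sparse if it has at most `k` nonzero entries. -/
def sparse {n : ℕ} (k : ℕ) (v : Fin n → ℝ) : Prop :=
  (Finset.univ.filter fun i => v i ≠ 0).card ≤ k

noncomputable def alpha1 (k : ℕ) (μ : ℝ) : ℝ :=
  Real.sqrt (1 + ((k : ℝ) - 1) * μ) / (1 - ((k : ℝ) - 1) * μ)

noncomputable def alpha2 (k : ℕ) (μ : ℝ) : ℝ :=
  Real.sqrt k * μ / (1 - ((k : ℝ) - 1) * μ)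

noncomputable def fk (k : ℕ) (t : ℝ) : ℝ :=
  (k : ℝ) * t ^ 2 + 3 * Real.sqrt k * t + 3

noncomputable def gk (k : ℕ) (t : ℝ) : ℝ :=
  2 * (k : ℝ) * t ^ 2 + 4 * Real.sqrt k * t + 1

section stmt5aux

lemma stmt5_l2norm_nonneg {ι : Type*} [Fintype ι] (v : ι → ℝ) : 0 ≤ l2norm v :=
  Real.sqrt_nonneg _

lemma stmt5_l2norm_sq {ι : Type*} [Fintype ι] (v : ι → ℝ) :
    l2norm v ^ 2 = ∑ i, (v i) ^ 2 :=
  Real.sq_sqrt (Finset.sum_nonneg fun _ _ => sq_nonneg _)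

lemma stmt5_l1norm_nonneg {ι : Type*} [Fintype ι] (v : ι → ℝ) : 0 ≤ l1norm v :=
  Finset.sum_nonneg fun _ _ => abs_nonneg _

lemma stmt5_ip_le_l2 {ι : Type*} [Fintype ι] (u v : ι → ℝ) :
    ∑ i, u i * v i ≤ l2norm u * l2norm v :=
  Real.sum_mul_le_sqrt_mul_sqrt _ _ _

lemma stmt5_ip_mulVec {m n : ℕ} (A : Matrix (Fin m) (Fin n) ℝ) (u v : Fin n → ℝ) :
    ∑ r, A.mulVec u r * A.mulVec v r
      = ∑ i, ∑ j, u i * v j * (∑ r, A r i * A r j) := by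
  have h1 : ∀ r, A.mulVec u r * A.mulVec v r
      = ∑ i, ∑ j, (A r i * u i) * (A r j * v j) := by
    intro r
    simp only [Matrix.mulVec, dotProduct, Finset.sum_mul_sum]
  simp only [h1, Finset.mul_sum]
  rw [Finset.sum_comm]
  refine Finset.sum_congr rfl fun i _ => ?_
  rw [Finset.sum_comm]
  refine Finset.sum_congr rfl fun j _ => ?_
  exact Finset.sum_congr rfl fun r _ => by ring

lemma stmt5_scale (lam a b e w : ℝ) (hlam : 0 < lam)
    (h : a + 1 / (2 * lam) * e ≤ b + 1 / (2 * lam) * w) :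
    e ≤ 2 * lam * (b - a) + w := by
  have h2 : (0 : ℝ) < 2 * lam := by linarith
  have h3 := mul_le_mul_of_nonneg_left h h2.le
  have he : 2 * lam * (1 / (2 * lam) * e) = e := by field_simp
  have hw : 2 * lam * (1 / (2 * lam) * w) = w := by field_simp
  rw [mul_add, mul_add, he, hw] at h3
  linarith

lemma stmt5_quad (N c t : ℝ) (hN : 0 ≤ N) (hc : 0 < c) (ht : 0 ≤ t)
    (h : N ^ 2 ≤ 2 * c * N + 2 * c * t) : N ≤ t + 2 * c := by
  nlinarith [sq_nonneg (N - c - (c + t)), sq_nonneg t, sq_nonneg (N - c)]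

lemma stmt5_cross_bound {m n : ℕ} (A : Matrix (Fin m) (Fin n) ℝ) (μ : ℝ) (hμ0 : 0 ≤ μ)
    (hg : ∀ i j : Fin n, i ≠ j → |∑ r, A r i * A r j| ≤ μ)
    (u w : Fin n → ℝ) (hd : ∀ i, u i * w i = 0) :
    |∑ r, A.mulVec u r * A.mulVec w r| ≤ μ * l1norm u * l1norm w := by
  rw [stmt5_ip_mulVec]
  calc |∑ i, ∑ j, u i * w j * (∑ r, A r i * A r j)|
      ≤ ∑ i, ∑ j, |u i * w j * (∑ r, A r i * A r j)| :=
        (Finset.abs_sum_le_sum_abs _ _).trans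
          (Finset.sum_le_sum fun i _ => Finset.abs_sum_le_sum_abs _ _)
    _ ≤ ∑ i, ∑ j, |u i| * |w j| * μ := by
        refine Finset.sum_le_sum fun i _ => Finset.sum_le_sum fun j _ => ?_
        rcases eq_or_ne i j with rfl | hij
        · simp [hd i, mul_nonneg (mul_nonneg (abs_nonneg (u i)) (abs_nonneg (w i))) hμ0]
        · rw [abs_mul, abs_mul]
          exact mul_le_mul_of_nonneg_left (hg i j hij)
            (mul_nonneg (abs_nonneg _) (abs_nonneg _))
    _ = μ * l1norm u * l1norm w := by
        have e : ∑ i, ∑ j, |u i| * |w j| * μ = μ * ∑ i, ∑ j, |u i| * |w j| := by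
          rw [Finset.mul_sum]
          exact Finset.sum_congr rfl fun i _ => by
            rw [Finset.mul_sum]; exact Finset.sum_congr rfl fun j _ => by ring
        rw [e, ← Finset.sum_mul_sum]
        simp only [l1norm]
        ring

lemma stmt5_gram_bound {m n : ℕ} (A : Matrix (Fin m) (Fin n) ℝ) (μ : ℝ) (hμ0 : 0 ≤ μ) (k : ℕ)
    (hg : ∀ i j : Fin n, i ≠ j → |∑ r, A r i * A r j| ≤ μ)
    (hgii : ∀ i : Fin n, (∑ r, A r i * A r i) = 1)
    (v : Fin n → ℝ) (hsupp : (l1norm v) ^ 2 ≤ (k : ℝ) * ∑ i, v i ^ 2) :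
    |∑ r, A.mulVec v r * A.mulVec v r - ∑ i, v i ^ 2|
      ≤ ((k : ℝ) - 1) * μ * ∑ i, v i ^ 2 := by
  have key : ∑ r, A.mulVec v r * A.mulVec v r - ∑ i, v i ^ 2
      = ∑ i, ∑ j ∈ Finset.univ.erase i, v i * v j * (∑ r, A r i * A r j) := by
    rw [stmt5_ip_mulVec, ← Finset.sum_sub_distrib]
    refine Finset.sum_congr rfl fun i _ => ?_
    rw [← Finset.add_sum_erase _ _ (Finset.mem_univ i), hgii i]
    ring_nf
  rw [key]
  have habs2 : ∀ i : Fin n, |v i| ^ 2 = v i ^ 2 := fun i => sq_abs _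
  calc |∑ i, ∑ j ∈ Finset.univ.erase i, v i * v j * (∑ r, A r i * A r j)|
      ≤ ∑ i, ∑ j ∈ Finset.univ.erase i, |v i| * |v j| * μ := by
        refine (Finset.abs_sum_le_sum_abs _ _).trans (Finset.sum_le_sum fun i _ => ?_)
        refine (Finset.abs_sum_le_sum_abs _ _).trans (Finset.sum_le_sum fun j hj => ?_)
        rw [abs_mul, abs_mul]
        exact mul_le_mul_of_nonneg_left (hg i j (Finset.ne_of_mem_erase hj).symm)
          (mul_nonneg (abs_nonneg _) (abs_nonneg _))
    _ = μ * ((l1norm v) ^ 2 - ∑ i, v i ^ 2) := by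
        have e1 : ∀ i : Fin n, ∑ j ∈ Finset.univ.erase i, |v i| * |v j| * μ
            = μ * (|v i| * l1norm v - |v i| ^ 2) := by
          intro i
          have e2 : ∑ j ∈ Finset.univ.erase i, |v i| * |v j| * μ
              = (|v i| * μ) * ∑ j ∈ Finset.univ.erase i, |v j| := by
            rw [Finset.mul_sum]
            exact Finset.sum_congr rfl fun j _ => by ring
          rw [e2, Finset.sum_erase_eq_sub (Finset.mem_univ i)]
          show |v i| * μ * (l1norm v - |v i|) = _
          ring
        rw [Finset.sum_congr rfl fun i _ => e1 i, ← Finset.mul_sum]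
        congr 1
        rw [Finset.sum_sub_distrib, ← Finset.sum_mul]
        congr 1
        · show (l1norm v) * l1norm v = _ ; ring
        · exact Finset.sum_congr rfl fun i _ => habs2 i
    _ ≤ ((k : ℝ) - 1) * μ * ∑ i, v i ^ 2 := by
        nlinarith [Finset.sum_nonneg (fun i (_ : i ∈ Finset.univ) => sq_nonneg (v i))]

end stmt5aux

theorem stmt_5 {m n : ℕ} (A : Matrix (Fin m) (Fin n) ℝ)
    (hA : ∀ j, l2norm (fun i => A i j) = 1)
    (k : ℕ) (hk : 2 ≤ k)
    (hμ : mutualCoherence A < 1 / (2 * (k : ℝ) - 1))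
    (x : Fin n → ℝ) (z : Fin m → ℝ) (b : Fin m → ℝ) (hb : b = A.mulVec x + z)
    (ε lam : ℝ) (hz : l2norm z ≤ ε) (hlam : 0 < lam)
    (xs : Fin n → ℝ)
    (hmin : ∀ u : Fin n → ℝ,
      l1norm xs + 1 / (2 * lam) * l2norm (b - A.mulVec xs) ^ 2 ≤
        l1norm u + 1 / (2 * lam) * l2norm (b - A.mulVec u) ^ 2)
    (xk : Fin n → ℝ) (hxk1 : sparse k xk)
    (hxk2 : ∀ y : Fin n → ℝ, sparse k y → l2norm (xk - x) ≤ l2norm (y - x)) :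
    l2norm (A.mulVec (xs - x)) ≤
      2 * lam / (Real.sqrt k * alpha1 k (mutualCoherence A) * lam + ε) * l1norm (x - xk)
        + 2 * (Real.sqrt k * alpha1 k (mutualCoherence A) * lam + ε) := by
  set μ := mutualCoherence A with hμdef
  -- coherence bounds
  have hg : ∀ i j : Fin n, i ≠ j → |∑ r, A r i * A r j| ≤ μ := by
    intro i j hij
    rw [hμdef]
    exact le_ciSup (f := fun p : {p : Fin n × Fin n // p.1 ≠ p.2} =>
      |∑ r, A r p.1.1 * A r p.1.2|) (Set.Finite.bddAbove (Set.finite_range _)) ⟨(i, j), hij⟩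
  have hμ0 : 0 ≤ μ := by
    by_cases hne : Nonempty {p : Fin n × Fin n // p.1 ≠ p.2}
    · obtain ⟨⟨⟨i, j⟩, hij⟩⟩ := hne
      exact (abs_nonneg _).trans (hg i j hij)
    · haveI := not_nonempty_iff.mp hne
      have : μ = 0 := by rw [hμdef]; exact Real.iSup_of_isEmpty _
      simp [this]
  have hgii : ∀ i : Fin n, (∑ r, A r i * A r i) = 1 := by
    intro i
    have h1 := hA i
    have h2 : ∑ r, (A r i) ^ 2 = 1 := by
      have := congrArg (fun t => t ^ 2) h1
      simpa [l2norm, Real.sq_sqrt (Finset.sum_nonneg fun (r : Fin m) _ => sq_nonneg (A r i))]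
        using this
    calc ∑ r, A r i * A r i = ∑ r, (A r i) ^ 2 :=
          Finset.sum_congr rfl fun r _ => (pow_two (A r i)).symm
      _ = 1 := h2
  clear_value μ
  -- numeric facts
  have hk2 : (2 : ℝ) ≤ (k : ℝ) := by exact_mod_cast hk
  have hden : (0 : ℝ) < 2 * (k : ℝ) - 1 := by linarith
  have hμ1 : μ * (2 * (k : ℝ) - 1) < 1 := (lt_div_iff₀ hden).mp hμ
  have hD : (0 : ℝ) < 1 - ((k : ℝ) - 1) * μ := by nlinarith
  have hP1 : (1 : ℝ) ≤ 1 + ((k : ℝ) - 1) * μ := by nlinarith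
  have hkμD : (k : ℝ) * μ ≤ 1 - ((k : ℝ) - 1) * μ := by nlinarith
  set D : ℝ := 1 - ((k : ℝ) - 1) * μ with hDdef
  set P : ℝ := 1 + ((k : ℝ) - 1) * μ with hPdef
  have hsP : (1 : ℝ) ≤ Real.sqrt P := Real.one_le_sqrt.mpr hP1
  have hsk : (0 : ℝ) < Real.sqrt k := Real.sqrt_pos.mpr (by positivity)
  have hα : alpha1 k μ = Real.sqrt P / D := rfl
  have hα0 : 0 < alpha1 k μ := by rw [hα]; exact div_pos (by linarith) hD
  clear_value D P
  have hε0 : (0 : ℝ) ≤ ε := (stmt5_l2norm_nonneg z).trans hz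
  set c : ℝ := Real.sqrt k * alpha1 k μ * lam + ε with hcdef
  have hc : 0 < c := by
    have : 0 < Real.sqrt k * alpha1 k μ * lam := by positivity
    linarith
  have hcD : c * D = Real.sqrt k * Real.sqrt P * lam + ε * D := by
    have h1 : Real.sqrt P / D * D = Real.sqrt P := div_mul_cancel₀ _ hD.ne'
    calc c * D = Real.sqrt k * (Real.sqrt P / D * D) * lam + ε * D := by
          rw [hcdef, hα]; ring
      _ = Real.sqrt k * Real.sqrt P * lam + ε * D := by rw [h1]
  clear_value c
  -- support set and splitting
  set T : Finset (Fin n) := Finset.univ.filter fun i => xk i ≠ 0 with hTdef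
  have hTk : (T.card : ℝ) ≤ (k : ℝ) := by exact_mod_cast hxk1
  clear_value T
  have hdi : ∀ i, (xs - x) i = xs i - x i := fun i => rfl
  set w1 : Fin n → ℝ := restrict (xs - x) T with hw1def
  set w2 : Fin n → ℝ := restrict (xs - x) Tᶜ with hw2def
  have hsplit : xs - x = w1 + w2 := by
    funext i
    by_cases hi : i ∈ T <;>
      simp [hw1def, hw2def, restrict, hi, Finset.mem_compl]
  have hd0 : ∀ i, w1 i * w2 i = 0 := by
    intro i
    by_cases hi : i ∈ T <;>
      simp [hw1def, hw2def, restrict, hi, Finset.mem_compl]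
  clear_value w1 w2
  -- notation
  set N : ℝ := l2norm (A.mulVec (xs - x)) with hNdef
  have hN0 : 0 ≤ N := by rw [hNdef]; exact stmt5_l2norm_nonneg _
  clear_value N
  set s1 : ℝ := l1norm w1 with hs1def
  set s2 : ℝ := l1norm w2 with hs2def
  have hs10 : 0 ≤ s1 := by rw [hs1def]; exact stmt5_l1norm_nonneg _
  have hs20 : 0 ≤ s2 := by rw [hs2def]; exact stmt5_l1norm_nonneg _
  set σ : ℝ := l1norm (x - xk) with hσdef
  have hσ0 : 0 ≤ σ := by rw [hσdef]; exact stmt5_l1norm_nonneg _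
  set S1 : ℝ := ∑ i, w1 i ^ 2 with hS1def
  have hS10 : 0 ≤ S1 := by rw [hS1def]; exact Finset.sum_nonneg fun _ _ => sq_nonneg _
  clear_value s1 s2 σ S1
  -- l1 vs l2 on the support
  have hl1T : s1 ^ 2 ≤ (k : ℝ) * S1 := by
    have e1 : s1 = ∑ i ∈ T, |w1 i| := by
      rw [hs1def, l1norm]
      exact (Finset.sum_subset (Finset.subset_univ T)
        (fun i _ hi => by simp [hw1def, restrict, hi])).symm
    have e2 : (∑ i ∈ T, |w1 i|) ^ 2 ≤ (T.card : ℝ) * ∑ i ∈ T, w1 i ^ 2 := by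
      have := Finset.sum_mul_sq_le_sq_mul_sq T (fun _ => (1 : ℝ)) (fun i => |w1 i|)
      simpa [sq_abs] using this
    have e3 : ∑ i ∈ T, w1 i ^ 2 ≤ S1 := by
      rw [hS1def]
      exact Finset.sum_le_sum_of_subset_of_nonneg (Finset.subset_univ T)
        (fun i _ _ => sq_nonneg _)
    have e4 : (0 : ℝ) ≤ ∑ i ∈ T, w1 i ^ 2 := Finset.sum_nonneg fun _ _ => sq_nonneg _
    rw [e1]
    calc (∑ i ∈ T, |w1 i|) ^ 2 ≤ (T.card : ℝ) * ∑ i ∈ T, w1 i ^ 2 := e2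
      _ ≤ (k : ℝ) * S1 := by
          apply mul_le_mul hTk e3 e4 (Nat.cast_nonneg k)
  have hs1S : s1 ≤ Real.sqrt k * Real.sqrt S1 := by
    have : s1 = Real.sqrt (s1 ^ 2) := (Real.sqrt_sq hs10).symm
    rw [this, ← Real.sqrt_mul (by positivity : (0:ℝ) ≤ (k:ℝ)) S1]
    exact Real.sqrt_le_sqrt hl1T
  -- Gram bounds
  have hgram := stmt5_gram_bound A μ hμ0 k hg hgii w1 (by rw [← hs1def, ← hS1def]; exact hl1T)
  rw [← hS1def] at hgram
  set Q1 : ℝ := ∑ r, A.mulVec w1 r * A.mulVec w1 r with hQ1def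
  have habsg := abs_le.mp hgram
  have hQlow : D * S1 ≤ Q1 := by
    rw [show D * S1 = S1 - ((k : ℝ) - 1) * μ * S1 from by rw [hDdef]; ring]
    linarith [habsg.1]
  have hQhigh : Q1 ≤ P * S1 := by
    rw [show P * S1 = S1 + ((k : ℝ) - 1) * μ * S1 from by rw [hPdef]; ring]
    linarith [habsg.2]
  have hQ10 : 0 ≤ Q1 := le_trans (mul_nonneg hD.le hS10) hQlow
  have hcross := stmt5_cross_bound A μ hμ0 hg w1 w2 hd0
  rw [← hs1def, ← hs2def] at hcross
  -- mulVec splitting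
  have hAd : ∀ r, A.mulVec (xs - x) r = A.mulVec w1 r + A.mulVec w2 r := by
    intro r
    rw [hsplit, Matrix.mulVec_add]
    rfl
  -- key inequality IS : D * s1 ≤ √k √P N + k μ s2
  have hl2w1 : l2norm (A.mulVec w1) = Real.sqrt Q1 := by
    rw [hQ1def, l2norm]
    congr 1
    exact Finset.sum_congr rfl fun r _ => pow_two (A.mulVec w1 r)
  have hipAd : ∑ r, A.mulVec w1 r * A.mulVec (xs - x) r ≤ Real.sqrt Q1 * N := by
    calc ∑ r, A.mulVec w1 r * A.mulVec (xs - x) r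
        ≤ l2norm (A.mulVec w1) * l2norm (A.mulVec (xs - x)) := stmt5_ip_le_l2 _ _
      _ = Real.sqrt Q1 * N := by rw [hl2w1, hNdef]
  have hQsplit : Q1 = (∑ r, A.mulVec w1 r * A.mulVec (xs - x) r)
      - ∑ r, A.mulVec w1 r * A.mulVec w2 r := by
    rw [← Finset.sum_sub_distrib, hQ1def]
    refine Finset.sum_congr rfl fun r _ => ?_
    rw [hAd r]; ring
  clear_value Q1
  have hQbound : Q1 ≤ Real.sqrt Q1 * N + μ * s1 * s2 := by
    have h1 : - (μ * s1 * s2) ≤ ∑ r, A.mulVec w1 r * A.mulVec w2 r :=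
      neg_le_of_abs_le hcross
    linarith [hipAd, hQsplit.le, hQsplit.ge]
  have hsQ : Real.sqrt Q1 ≤ Real.sqrt P * Real.sqrt S1 := by
    rw [← Real.sqrt_mul (by rw [hPdef]; linarith : (0:ℝ) ≤ P) S1]
    exact Real.sqrt_le_sqrt hQhigh
  have hmain : D * S1 ≤ Real.sqrt P * Real.sqrt S1 * N + μ * s1 * s2 := by
    calc D * S1 ≤ Q1 := hQlow
      _ ≤ Real.sqrt Q1 * N + μ * s1 * s2 := hQbound
      _ ≤ Real.sqrt P * Real.sqrt S1 * N + μ * s1 * s2 := by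
          have := mul_le_mul_of_nonneg_right hsQ hN0
          linarith
  have hIS : D * s1 ≤ Real.sqrt k * Real.sqrt P * N + (k : ℝ) * μ * s2 := by
    rcases eq_or_lt_of_le (Real.sqrt_nonneg S1) with hS0 | hSpos
    · -- sqrt S1 = 0 hence s1 = 0
      have hs1z : s1 = 0 := by
        rw [← hS0, mul_zero] at hs1S
        exact le_antisymm hs1S hs10
      rw [hs1z, mul_zero]
      have n1 : 0 ≤ Real.sqrt k * Real.sqrt P * N :=
        mul_nonneg (mul_nonneg (Real.sqrt_nonneg _) (Real.sqrt_nonneg _)) hN0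
      have n2 : 0 ≤ (k : ℝ) * μ * s2 :=
        mul_nonneg (mul_nonneg (Nat.cast_nonneg k) hμ0) hs20
      linarith
    · have hSS : Real.sqrt S1 * Real.sqrt S1 = S1 := Real.mul_self_sqrt hS10
      have step : D * s1 * Real.sqrt S1
          ≤ (Real.sqrt k * Real.sqrt P * N + (k : ℝ) * μ * s2) * Real.sqrt S1 := by
        have b1 : D * s1 * Real.sqrt S1 ≤ D * (Real.sqrt k * Real.sqrt S1) * Real.sqrt S1 := by
          have := mul_le_mul_of_nonneg_left hs1S hD.le
          exact mul_le_mul_of_nonneg_right this (Real.sqrt_nonneg S1)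
        have b2 : D * (Real.sqrt k * Real.sqrt S1) * Real.sqrt S1 = Real.sqrt k * (D * S1) := by
          linear_combination (Real.sqrt k * D) * hSS
        have b3 : Real.sqrt k * (D * S1)
            ≤ Real.sqrt k * (Real.sqrt P * Real.sqrt S1 * N + μ * s1 * s2) :=
          mul_le_mul_of_nonneg_left hmain hsk.le
        have b4 : Real.sqrt k * (μ * s1 * s2)
            ≤ Real.sqrt k * (μ * (Real.sqrt k * Real.sqrt S1) * s2) := by
          apply mul_le_mul_of_nonneg_left _ hsk.le
          have := mul_le_mul_of_nonneg_left hs1S hμ0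
          exact mul_le_mul_of_nonneg_right this hs20
        have b5 : Real.sqrt k * (μ * (Real.sqrt k * Real.sqrt S1) * s2)
            = ((k : ℝ) * μ * s2) * Real.sqrt S1 := by
          have hkk : Real.sqrt k * Real.sqrt k = (k : ℝ) :=
            Real.mul_self_sqrt (by positivity)
          linear_combination (μ * Real.sqrt S1 * s2) * hkk
        calc D * s1 * Real.sqrt S1 ≤ Real.sqrt k * (D * S1) := by linarith
          _ ≤ Real.sqrt k * (Real.sqrt P * Real.sqrt S1 * N) + Real.sqrt k * (μ * s1 * s2) := by
              rw [mul_add] at b3; linarith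
          _ ≤ Real.sqrt k * (Real.sqrt P * Real.sqrt S1 * N) + ((k : ℝ) * μ * s2) * Real.sqrt S1 := by
              linarith
          _ = (Real.sqrt k * Real.sqrt P * N + (k : ℝ) * μ * s2) * Real.sqrt S1 := by ring
      exact le_of_mul_le_mul_right step hSpos
  -- I1 : N² ≤ 2 lam (l1 x - l1 xs) + 2 ε N
  have hbz : b - A.mulVec x = z := by rw [hb]; abel
  have hbxs : b - A.mulVec xs = z - A.mulVec (xs - x) := by
    rw [hb, Matrix.mulVec_sub]; abel
  have hI1 : N ^ 2 ≤ 2 * lam * (l1norm x - l1norm xs) + 2 * ε * N := by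
    have hm := hmin x
    rw [hbz, hbxs] at hm
    have hexp : l2norm (z - A.mulVec (xs - x)) ^ 2
        = l2norm z ^ 2 - 2 * (∑ r, z r * A.mulVec (xs - x) r) + N ^ 2 := by
      rw [stmt5_l2norm_sq, stmt5_l2norm_sq, hNdef, stmt5_l2norm_sq, Finset.mul_sum,
        ← Finset.sum_sub_distrib, ← Finset.sum_add_distrib]
      exact Finset.sum_congr rfl fun r _ => by
        simp only [Pi.sub_apply]; ring
    have hm2 := stmt5_scale lam (l1norm xs) (l1norm x)
      (l2norm (z - A.mulVec (xs - x)) ^ 2) (l2norm z ^ 2) hlam hm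
    rw [hexp] at hm2
    have hip : ∑ r, z r * A.mulVec (xs - x) r ≤ ε * N := by
      calc ∑ r, z r * A.mulVec (xs - x) r
          ≤ l2norm z * l2norm (A.mulVec (xs - x)) := stmt5_ip_le_l2 _ _
        _ ≤ ε * N := by
            rw [← hNdef]
            exact mul_le_mul_of_nonneg_right hz hN0
    linarith [hip, hm2]
  -- I2 : l1 x - l1 xs ≤ s1 - s2 + 2 σ
  have hI2 : l1norm x - l1norm xs ≤ s1 - s2 + 2 * σ := by
    have hpt : ∀ i : Fin n, |x i| - |xs i| ≤ |w1 i| - |w2 i| + 2 * |x i - xk i| := by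
      intro i
      by_cases hi : i ∈ T
      · have e1 : w1 i = xs i - x i := by simp [hw1def, restrict, hi, hdi]
        have e2 : w2 i = 0 := by simp [hw2def, restrict, Finset.mem_compl, hi]
        rw [e1, e2]
        simp only [abs_zero, sub_zero]
        have := abs_sub_abs_le_abs_sub (x i) (xs i)
        have h3 : |x i - xs i| = |xs i - x i| := abs_sub_comm _ _
        have h4 : (0:ℝ) ≤ |x i - xk i| := abs_nonneg _
        linarith
      · have e1 : w1 i = 0 := by simp [hw1def, restrict, hi]
        have e2 : w2 i = xs i - x i := by simp [hw2def, restrict, Finset.mem_compl, hi, hdi]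
        have e3 : xk i = 0 := by
          by_contra hcon
          exact hi (by simp [hTdef, hcon])
        rw [e1, e2, e3]
        simp only [sub_zero, abs_zero, zero_sub]
        linarith [abs_sub (xs i) (x i), abs_nonneg (x i), abs_nonneg (xs i)]
    have hsum := Finset.sum_le_sum fun i (_ : i ∈ Finset.univ) => hpt i
    have lhs_eq : ∑ i, (|x i| - |xs i|) = l1norm x - l1norm xs := by
      rw [Finset.sum_sub_distrib]; rfl
    have rhs_eq : ∑ i, (|w1 i| - |w2 i| + 2 * |x i - xk i|) = s1 - s2 + 2 * σ := by
      rw [Finset.sum_add_distrib, Finset.sum_sub_distrib, ← Finset.mul_sum,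
        hs1def, hs2def, hσdef]
      simp [l1norm]
    calc l1norm x - l1norm xs = ∑ i, (|x i| - |xs i|) := lhs_eq.symm
      _ ≤ ∑ i, (|w1 i| - |w2 i| + 2 * |x i - xk i|) := hsum
      _ = s1 - s2 + 2 * σ := rhs_eq
  -- combine: N² ≤ 2 c N + 4 lam σ
  have hcomb : N ^ 2 ≤ 2 * c * N + 4 * lam * σ := by
    have h12 : N ^ 2 ≤ 2 * lam * (s1 - s2 + 2 * σ) + 2 * ε * N := by
      have := mul_le_mul_of_nonneg_left hI2 (by linarith : (0:ℝ) ≤ 2 * lam)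
      linarith [hI1]
    have t1 := mul_le_mul_of_nonneg_left h12 hD.le
    have t2 := mul_le_mul_of_nonneg_left hIS (by linarith : (0:ℝ) ≤ 2 * lam)
    have t3 : 0 ≤ 2 * lam * s2 * (D - (k : ℝ) * μ) :=
      mul_nonneg (mul_nonneg (by linarith : (0:ℝ) ≤ 2 * lam) hs20)
        (sub_nonneg.mpr hkμD)
    have t4 : c * D * (2 * N) = (Real.sqrt k * Real.sqrt P * lam + ε * D) * (2 * N) := by
      rw [hcD]
    have hfin : D * (N ^ 2) ≤ D * (2 * c * N + 4 * lam * σ) := by linarith [t1, t2, t3, t4]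
    exact le_of_mul_le_mul_left hfin hD
  -- final quadratic step
  have ht0 : 0 ≤ 2 * lam * σ / c := by positivity
  have hq : N ≤ 2 * lam * σ / c + 2 * c := by
    apply stmt5_quad N c (2 * lam * σ / c) hN0 hc ht0
    have : 2 * c * (2 * lam * σ / c) = 4 * lam * σ := by field_simp; ring
    rw [this]
    exact hcomb
  have : 2 * lam / c * σ = 2 * lam * σ / c := by ring
  rw [hNdef] at hq
  linarith [hq]
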